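/- Almost surely, the set {n ∈ ℕ : κ_n = ∞} is infinite; moreover, denoting by N_0 < N_1 < N_2 < … its increasing enumeration, the random blocks Ψ_k := (N_{k+1} − N_k, (Y_{N_k}, Y_{N_k+1}, …, Y_{N_{k+1}−1})) for k ∈ ℕ, viewed as random elements of the measurable disjoint union ⨆_{m ≥ 1} ({m} × E^m), are independent and identically distributed, each with the law of (N_1, (Y_0, Y_1, …, Y_{N_1−1})) under the conditional probability measure ℙ(· | κ_0 = ∞). -/

import Mathlib

open MeasureTheory ProbabilityTheory Set Filter Topology

open scoped Classical

namespace RenewalAux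

/-- characterization of `Nat.nth` suitable for measurability arguments -/
theorem nth_eq_iff'' (p : ℕ → Prop) (k r : ℕ) :
    Nat.nth p k = r ↔
      ((p r ∧ Nat.count p r = k) ∨ (r = 0 ∧ ∃ hf : (setOf p).Finite, hf.toFinset.card ≤ k)) := by
  constructor
  · intro h
    by_cases hbig : ∀ hf : (setOf p).Finite, k < hf.toFinset.card
    · subst h
      exact Or.inl ⟨Nat.nth_mem k hbig, Nat.count_nth hbig⟩
    · push_neg at hbig
      obtain ⟨hf, hle⟩ := hbig
      refine Or.inr ⟨?_, hf, hle⟩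
      rw [← h, Nat.nth_of_card_le hf hle]
  · rintro (⟨hpr, hc⟩ | ⟨rfl, hf, hle⟩)
    · rw [← hc, Nat.nth_count hpr]
    · exact Nat.nth_of_card_le hf hle

theorem finite_card_le_iff (p : ℕ → Prop) (k : ℕ) :
    (∃ hf : (setOf p).Finite, hf.toFinset.card ≤ k) ↔ ∀ n, Nat.count p n ≤ k := by
  constructor
  · rintro ⟨hf, hle⟩ n
    exact (Nat.count_le_card hf n).trans hle
  · intro h
    have hf : (setOf p).Finite := by
      by_contra hinf
      obtain ⟨n, hn⟩ := Nat.surjective_count_of_infinite_setOf hinf (k + 1)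
      have := h n
      omega
    refine ⟨hf, ?_⟩
    obtain ⟨b, hb⟩ := hf.bddAbove
    refine le_trans ?_ (h (b + 1))
    rw [Nat.count_eq_card_filter_range]
    apply Finset.card_le_card
    intro x hx
    rw [Set.Finite.mem_toFinset] at hx
    simp only [Finset.mem_filter, Finset.mem_range]
    exact ⟨Nat.lt_succ_of_le (hb hx), hx⟩

variable {α : Type*} {mα : MeasurableSpace α}

theorem measurable_count (q : α → ℕ → Prop) (hq : ∀ n, MeasurableSet {a | q a n}) (n : ℕ) :
    Measurable (fun a => Nat.count (q a) n) := by
  induction n with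
  | zero => simp only [Nat.count_zero]; exact measurable_const
  | succ n ih =>
    have : (fun a => Nat.count (q a) (n + 1))
        = fun a => Nat.count (q a) n + if q a n then 1 else 0 := by
      funext a; rw [Nat.count_succ]
    rw [this]
    exact ih.add (Measurable.ite (hq n) measurable_const measurable_const)

theorem measurable_nth (q : α → ℕ → Prop) (hq : ∀ n, MeasurableSet {a | q a n}) (k : ℕ) :
    Measurable (fun a => Nat.nth (q a) k) := by
  apply measurable_to_countable'
  intro r
  have : (fun a => Nat.nth (q a) k) ⁻¹' {r}
      = ({a | q a r} ∩ {a | Nat.count (q a) r = k})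
        ∪ ({a : α | r = 0} ∩ ⋂ n, {a | Nat.count (q a) n ≤ k}) := by
    ext a
    simp only [Set.mem_preimage, Set.mem_singleton_iff, Set.mem_union, Set.mem_inter_iff,
      Set.mem_setOf_eq, Set.mem_iInter]
    rw [nth_eq_iff'', finite_card_le_iff]
  rw [this]
  refine MeasurableSet.union (MeasurableSet.inter (hq r) ?_) (MeasurableSet.inter ?_ ?_)
  · exact measurable_count q hq r (MeasurableSet.singleton k)
  · by_cases hr : r = 0 <;> simp [hr]
  · exact MeasurableSet.iInter fun n =>
      measurable_count q hq n measurableSet_Iic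

theorem measurable_apply_nat {γ : Type*} [MeasurableSpace γ] {h : α → ℕ} (hh : Measurable h)
    {f : ℕ → α → γ} (hf : ∀ n, Measurable (f n)) : Measurable fun a => f (h a) a := by
  intro s hs
  have : (fun a => f (h a) a) ⁻¹' s = ⋃ n, (h ⁻¹' {n}) ∩ ((f n) ⁻¹' s) := by
    ext a
    simp only [Set.mem_preimage, Set.mem_iUnion, Set.mem_inter_iff, Set.mem_singleton_iff]
    constructor
    · intro hx; exact ⟨h a, rfl, hx⟩
    · rintro ⟨n, rfl, hx⟩; exact hx
  rw [this]
  exact MeasurableSet.iUnion fun n => (hh (MeasurableSet.singleton n)).inter (hf n hs)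

theorem measurable_sigma_mk'' {β : ℕ → Type*} [∀ n, MeasurableSpace (β n)] (n : ℕ) :
    Measurable (@Sigma.mk ℕ β n) :=
  measurable_iff_le_map.mpr (iInf_le _ n)

theorem measurable_mk_dep {E : Type*} [MeasurableSpace E] {g : α → ℕ}
    (hg : Measurable g) {F : α → (m : ℕ) → (Fin m → E)} (hF : ∀ m, Measurable fun a => F a m) :
    Measurable fun a => (⟨g a, F a (g a)⟩ : Σ m, Fin m → E) := by
  intro s hs
  have hmk : ∀ m : ℕ, MeasurableSet ((Sigma.mk m) ⁻¹' s) := fun m => measurable_sigma_mk'' m hs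
  have : (fun a => (⟨g a, F a (g a)⟩ : Σ m, Fin m → E)) ⁻¹' s
      = ⋃ m, (g ⁻¹' {m}) ∩ {a | F a m ∈ (Sigma.mk m) ⁻¹' s} := by
    ext a
    simp only [Set.mem_preimage, Set.mem_iUnion, Set.mem_inter_iff, Set.mem_singleton_iff,
      Set.mem_setOf_eq]
    constructor
    · intro hx; exact ⟨g a, rfl, hx⟩
    · rintro ⟨m, hm, hx⟩
      subst hm; exact hx
  rw [this]
  exact MeasurableSet.iUnion fun m => (hg (MeasurableSet.singleton m)).inter ((hF m) (hmk m))

theorem sigma_mk_eq {E : Type*} {m m' : ℕ} (f : Fin m → E) (f' : Fin m' → E) (h : m = m')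
    (hf : ∀ (j : ℕ) (h1 : j < m) (h2 : j < m'), f ⟨j, h1⟩ = f' ⟨j, h2⟩) :
    (⟨m, f⟩ : Σ m, Fin m → E) = ⟨m', f'⟩ := by
  subst h
  have : f = f' := by
    funext j
    exact hf j.1 j.2 j.2
  rw [this]


/-- If `s` strictly enumerates the elements of `q` up to `s (Fin.last k)`,
then `Nat.count` and `Nat.nth` recover it. -/
theorem count_enum {k : ℕ} (q : ℕ → Prop) [DecidablePred q] (s : Fin (k + 1) → ℕ)
    (hs : StrictMono s)
    (hq : ∀ j ≤ s (Fin.last k), (q j ↔ ∃ i, s i = j)) (i : Fin (k + 1)) :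
    Nat.count q (s i) = (i : ℕ) := by
  rw [Nat.count_eq_card_filter_range]
  have hset : (Finset.range (s i)).filter q
      = (Finset.univ.filter (fun i' : Fin (k + 1) => i' < i)).image s := by
    ext j
    simp only [Finset.mem_filter, Finset.mem_range, Finset.mem_image, Finset.mem_univ, true_and]
    constructor
    · rintro ⟨hlt, hqj⟩
      obtain ⟨i', rfl⟩ := (hq j (le_trans hlt.le (hs.monotone (Fin.le_last i)))).mp hqj
      exact ⟨i', hs.lt_iff_lt.mp hlt, rfl⟩
    · rintro ⟨i', hi', rfl⟩
      refine ⟨hs hi', ?_⟩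
      exact (hq (s i') (hs.monotone (Fin.le_last i'))).mpr ⟨i', rfl⟩
  rw [hset, Finset.card_image_of_injective _ hs.injective]
  have : (Finset.univ.filter (fun i' : Fin (k + 1) => i' < i)) = Finset.Iio i := by
    ext i'; simp
  rw [this, Fin.card_Iio]

theorem nth_enum {k : ℕ} (q : ℕ → Prop) (s : Fin (k + 1) → ℕ) (hs : StrictMono s)
    (hq : ∀ j ≤ s (Fin.last k), (q j ↔ ∃ i, s i = j)) (i : Fin (k + 1)) :
    Nat.nth q (i : ℕ) = s i := by
  rw [← count_enum q s hs hq i]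
  exact Nat.nth_count ((hq (s i) (hs.monotone (Fin.le_last i))).mpr ⟨i, rfl⟩)

theorem shifted_infinite {q : ℕ → Prop} (hq : (setOf q).Infinite) (n : ℕ) :
    (setOf (fun r => q (n + r))).Infinite := by
  by_contra hfin
  rw [Set.not_infinite] at hfin
  apply hq
  have : setOf q ⊆ Set.Iio n ∪ (fun r => n + r) '' (setOf fun r => q (n + r)) := by
    intro x hx
    rcases lt_or_ge x n with h | h
    · exact Or.inl h
    · exact Or.inr ⟨x - n, by show q (n + (x - n)); rw [Nat.add_sub_cancel' h]; exact hx, Nat.add_sub_cancel' h⟩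
  exact Set.Finite.subset ((Set.finite_Iio n).union (hfin.image _)) this

/-- shift identity for `Nat.nth` -/
theorem nth_shift {q : ℕ → Prop} [DecidablePred q] (hq : (setOf q).Infinite) {n k : ℕ} (hqn : q n)
    (hcn : Nat.count q n = k) (i : ℕ) :
    Nat.nth q (k + i) = n + Nat.nth (fun r => q (n + r)) i := by
  set q' : ℕ → Prop := fun r => q (n + r) with hq'
  have hq'inf : (setOf q').Infinite := shifted_infinite hq n
  have h1 : q' (Nat.nth q' i) := Nat.nth_mem_of_infinite hq'inf i
  have h2 : Nat.count q' (Nat.nth q' i) = i := Nat.count_nth_of_infinite hq'inf i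
  have h3 : Nat.count q (n + Nat.nth q' i) = k + i := by
    rw [Nat.count_add, hcn, h2]
  rw [← h3]
  exact Nat.nth_count h1

theorem enat_sub_eq_top_iff (a : ℕ∞) (n : ℕ) : a - (n : ℕ∞) = ⊤ ↔ a = ⊤ := by
  cases a with
  | top => simp [WithTop.top_sub_coe]
  | coe m =>
    constructor
    · intro h
      exfalso
      have : ((m : ℕ∞) - (n : ℕ∞)) = ((m - n : ℕ) : ℕ∞) := by
        exact_mod_cast (ENat.coe_sub m n).symm
      rw [this] at h
      exact (WithTop.coe_ne_top) h
    · intro h; exact absurd h (WithTop.coe_ne_top)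

theorem enat_le_sub_one_iff (a : ℕ∞) (n : ℕ) (hn : 1 ≤ n) :
    a ≤ ((n - 1 : ℕ) : ℕ∞) ↔ ¬ ((n : ℕ∞) ≤ a) := by
  rw [not_le]
  cases a with
  | top => simp [WithTop.coe_lt_top]
  | coe m =>
    rw [Nat.cast_le, Nat.cast_lt]
    omega


section Defs

variable {Ω E : Type*} [MeasurableSpace E]

/-- the block decomposition of a sequence of pairs, along the renewal pattern -/
noncomputable def blockSeq (x : ℕ → E × ℕ∞) (i : ℕ) : Σ m, Fin m → E :=
  ⟨Nat.nth (fun n => (x n).2 = ⊤) (i + 1) - Nat.nth (fun n => (x n).2 = ⊤) i,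
    fun j => (x (Nat.nth (fun n => (x n).2 = ⊤) i + (j : ℕ))).1⟩

theorem measurable_blockSeq (i : ℕ) : Measurable (fun x : ℕ → E × ℕ∞ => blockSeq x i) := by
  have hq : ∀ n, MeasurableSet {x : ℕ → E × ℕ∞ | (x n).2 = ⊤} := by
    intro n
    exact (measurable_snd.comp (measurable_pi_apply n)) (MeasurableSet.singleton ⊤)
  have hnth : ∀ k, Measurable (fun x : ℕ → E × ℕ∞ => Nat.nth (fun n => (x n).2 = ⊤) k) :=
    fun k => measurable_nth _ hq k
  have hsub : Measurable (fun x : ℕ → E × ℕ∞ =>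
      Nat.nth (fun n => (x n).2 = ⊤) (i + 1) - Nat.nth (fun n => (x n).2 = ⊤) i) :=
    (hnth (i + 1)).sub (hnth i)
  unfold blockSeq
  exact measurable_mk_dep
    (F := fun x m => fun j : Fin m => (x (Nat.nth (fun n => (x n).2 = ⊤) i + (j : ℕ))).1)
    hsub (fun m => by
    apply measurable_pi_lambda
    intro j
    show Measurable fun x : ℕ → E × ℕ∞ => (x (Nat.nth (fun n => (x n).2 = ⊤) i + (j : ℕ))).1
    exact measurable_apply_nat
      (h := fun x : ℕ → E × ℕ∞ => Nat.nth (fun n => (x n).2 = ⊤) i + (j : ℕ))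
      (f := fun n (x : ℕ → E × ℕ∞) => (x n).1)
      ((hnth i).add measurable_const)
      (fun n => measurable_fst.comp (measurable_pi_apply n)))

variable (κ : ℕ → Ω → ℕ∞) (Y : ℕ → Ω → E) {i : ℕ}

/-- the sequence of pairs `(Y_k, κ_k - k)` -/
def Xseq (ω : Ω) : ℕ → E × ℕ∞ := fun k => (Y k ω, κ k ω - (k : ℕ∞))

/-- the renewal blocks, as in the statement -/
noncomputable def blk (k : ℕ) (ω : Ω) : Σ m, Fin m → E :=
  ⟨Nat.nth (fun n => κ n ω = ⊤) (k + 1) - Nat.nth (fun n => κ n ω = ⊤) k,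
    fun j => Y (Nat.nth (fun n => κ n ω = ⊤) k + (j : ℕ)) ω⟩

theorem pattern_eq (ω : Ω) :
    (fun n => (Xseq κ Y ω n).2 = ⊤) = (fun n => κ n ω = ⊤) := by
  funext n
  exact propext (enat_sub_eq_top_iff (κ n ω) n)

theorem blockSeq_Xseq (ω : Ω) : blockSeq (Xseq κ Y ω) = fun k => blk κ Y k ω := by
  funext k
  unfold blockSeq blk
  rw [pattern_eq]
  rfl

variable {mΩ : MeasurableSpace Ω}

theorem measurable_Xseq (hκ : ∀ i, Measurable (κ i)) (hY : ∀ n, Measurable (Y n)) :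
    Measurable (Xseq κ Y) := by
  apply measurable_pi_lambda
  intro k
  exact (hY k).prodMk ((Measurable.of_discrete (f := fun t : ℕ∞ => t - (k : ℕ∞))).comp (hκ k))

theorem measurable_blk (hκ : ∀ i, Measurable (κ i)) (hY : ∀ n, Measurable (Y n)) (k : ℕ) :
    Measurable (blk κ Y k) := by
  have : blk κ Y k = (fun x => blockSeq x k) ∘ (Xseq κ Y) := by
    funext ω
    exact (congrFun (blockSeq_Xseq κ Y ω) k).symm
  rw [this]
  exact (measurable_blockSeq k).comp (measurable_Xseq κ Y hκ hY)

theorem measurable_kappa (hκ_stop : ∀ n : ℕ, MeasurableSet {ω | κ i ω ≤ (n : ℕ∞)}) :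
    Measurable (κ i) := by
  apply measurable_to_countable'
  intro r
  cases r with
  | top =>
    have : (κ i) ⁻¹' {⊤} = ⋂ n : ℕ, {ω | κ i ω ≤ (n : ℕ∞)}ᶜ := by
      ext ω
      simp only [Set.mem_preimage, Set.mem_singleton_iff, Set.mem_iInter, Set.mem_compl_iff,
        Set.mem_setOf_eq, not_le]
      constructor
      · intro h n; rw [h]; exact WithTop.coe_lt_top n
      · intro h
        by_contra hne
        obtain ⟨m, hm⟩ := WithTop.ne_top_iff_exists.mp hne
        have := h m
        rw [← hm] at this
        exact absurd le_rfl (not_le.mpr this)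
    rw [this]
    exact MeasurableSet.iInter fun n => (hκ_stop n).compl
  | coe m =>
    cases m with
    | zero =>
      have : (κ i) ⁻¹' {((0 : ℕ) : ℕ∞)} = {ω | κ i ω ≤ ((0 : ℕ) : ℕ∞)} := by
        ext ω
        simp only [Set.mem_preimage, Set.mem_singleton_iff, Set.mem_setOf_eq, Nat.cast_zero]
        exact ⟨fun h => le_of_eq h, fun h => le_antisymm h zero_le⟩
      rw [show (((0 : ℕ) : ℕ∞) : ℕ∞) = ((0 : ℕ) : ℕ∞) from rfl] at this
      exact this ▸ hκ_stop 0
    | succ m' =>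
      have : (κ i) ⁻¹' {((m' + 1 : ℕ) : ℕ∞)}
          = {ω | κ i ω ≤ ((m' + 1 : ℕ) : ℕ∞)} ∩ {ω | κ i ω ≤ ((m' : ℕ) : ℕ∞)}ᶜ := by
        ext ω
        simp only [Set.mem_preimage, Set.mem_singleton_iff, Set.mem_inter_iff, Set.mem_setOf_eq,
          Set.mem_compl_iff, not_le]
        constructor
        · intro h
          rw [h]
          exact ⟨le_rfl, by exact_mod_cast Nat.lt_succ_self m'⟩
        · rintro ⟨h1, h2⟩
          cases hκv : κ i ω with
          | top =>
            exfalso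
            rw [hκv, top_le_iff] at h1
            exact (ENat.coe_ne_top _) h1
          | coe v =>
            rw [hκv] at h1 h2
            have hv1 : v ≤ m' + 1 := by exact_mod_cast h1
            have hv2 : m' < v := by exact_mod_cast h2
            congr
            omega
      rw [this]
      exact (hκ_stop (m' + 1)).inter (hκ_stop m').compl


theorem core (μ : Measure Ω) [IsProbabilityMeasure μ] (ℱ : Filtration ℕ mΩ)
    (h_iii : ∀ g : (ℕ → E × ℕ∞) → ℝ, Measurable g → (∃ Cg : ℝ, ∀ x, |g x| ≤ Cg) →
      ∀ n : ℕ, 1 ≤ n →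
      μ[fun ω => g (fun k => (Y (n + k) ω, κ (n + k) ω - ((n + k : ℕ) : ℕ∞)))
            * ({ω' | κ n ω' = ⊤}.indicator (fun _ => (1 : ℝ)) ω) | ℱ (n - 1)]
        =ᵐ[μ] fun _ => ∫ ω, g (fun k => (Y k ω, κ k ω - ((k : ℕ) : ℕ∞)))
            * ({ω' | κ 0 ω' = ⊤}.indicator (fun _ => (1 : ℝ)) ω) ∂μ)
    (hκ : ∀ i, Measurable (κ i)) (hY : ∀ n, Measurable (Y n))
    (n : ℕ) (hn : 1 ≤ n) (A : Set Ω) (hA : MeasurableSet[ℱ (n - 1)] A)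
    (C : Set (ℕ → E × ℕ∞)) (hC : MeasurableSet C) :
    μ (A ∩ {ω | (fun k => Xseq κ Y ω (n + k)) ∈ C} ∩ {ω | κ n ω = ⊤})
      = μ A * μ ({ω | Xseq κ Y ω ∈ C} ∩ {ω | κ 0 ω = ⊤}) := by
  set g : (ℕ → E × ℕ∞) → ℝ := C.indicator (fun _ => (1 : ℝ)) with hgdef
  have hg : Measurable g := measurable_const.indicator hC
  have hgb : ∀ x, |g x| ≤ 1 := by
    intro x
    by_cases hx : x ∈ C <;> simp [hgdef, Set.indicator_of_mem, Set.indicator_of_notMem, hx]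
  set S : Set Ω := {ω | (fun k => Xseq κ Y ω (n + k)) ∈ C} ∩ {ω | κ n ω = ⊤} with hSdef
  set S0 : Set Ω := {ω | Xseq κ Y ω ∈ C} ∩ {ω | κ 0 ω = ⊤} with hS0def
  have hshift : Measurable (fun ω (k : ℕ) => Xseq κ Y ω (n + k)) :=
    measurable_pi_lambda _ fun k => (measurable_pi_apply (n + k)).comp (measurable_Xseq κ Y hκ hY)
  have hS : MeasurableSet S :=
    (hshift hC).inter ((hκ n) (MeasurableSet.singleton ⊤))
  have hS0 : MeasurableSet S0 :=
    ((measurable_Xseq κ Y hκ hY) hC).inter ((hκ 0) (MeasurableSet.singleton ⊤))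
  have hf_eq : (fun ω => g (fun k => (Y (n + k) ω, κ (n + k) ω - ((n + k : ℕ) : ℕ∞)))
      * ({ω' | κ n ω' = ⊤}.indicator (fun _ => (1 : ℝ)) ω))
      = S.indicator (fun _ => (1 : ℝ)) := by
    funext ω
    by_cases h1 : (fun k => Xseq κ Y ω (n + k)) ∈ C <;>
      by_cases h2 : κ n ω = ⊤ <;>
      simp [hgdef, hSdef, Set.indicator_apply, h1, h2, Xseq]
  have hf0_eq : (fun ω => g (fun k => (Y k ω, κ k ω - ((k : ℕ) : ℕ∞)))
      * ({ω' | κ 0 ω' = ⊤}.indicator (fun _ => (1 : ℝ)) ω))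
      = S0.indicator (fun _ => (1 : ℝ)) := by
    funext ω
    have hXeq : (fun k => (Y k ω, κ k ω - (k : ℕ∞))) = Xseq κ Y ω := rfl
    by_cases h1 : Xseq κ Y ω ∈ C <;>
      by_cases h2 : κ 0 ω = ⊤ <;>
      simp [hgdef, hS0def, Set.indicator_apply, h1, h2, hXeq]
  have h := h_iii g hg ⟨1, hgb⟩ n hn
  rw [hf_eq] at h
  have hconst : (∫ ω, g (fun k => (Y k ω, κ k ω - ((k : ℕ) : ℕ∞)))
      * ({ω' | κ 0 ω' = ⊤}.indicator (fun _ => (1 : ℝ)) ω) ∂μ) = (μ S0).toReal := by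
    rw [hf0_eq, integral_indicator_const (1 : ℝ) hS0, smul_eq_mul, mul_one]
    rfl
  rw [hconst] at h
  have hint : Integrable (S.indicator (fun _ => (1 : ℝ))) μ :=
    (integrable_const (1 : ℝ)).indicator hS
  haveI : SigmaFinite (μ.trim (ℱ.le (n - 1))) := by
    have : IsFiniteMeasure (μ.trim (ℱ.le (n - 1))) := isFiniteMeasure_trim _
    infer_instance
  have key : ∫ ω in A, (S.indicator (fun _ => (1 : ℝ))) ω ∂μ
      = ∫ ω in A, (fun _ => (μ S0).toReal) ω ∂μ := by
    rw [← setIntegral_condExp (ℱ.le (n - 1)) hint hA]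
    exact setIntegral_congr_ae (ℱ.le _ _ hA)
      (h.mono fun ω hω _ => hω)
  have hAmeas : MeasurableSet A := ℱ.le _ _ hA
  rw [setIntegral_indicator hS, setIntegral_const, setIntegral_const, smul_eq_mul, mul_one,
    smul_eq_mul] at key
  have : μ (A ∩ S) = μ A * μ S0 := by
    have h1 : μ (A ∩ S) ≠ ⊤ := measure_ne_top μ _
    have h2 : μ A * μ S0 ≠ ⊤ :=
      ENNReal.mul_ne_top (measure_ne_top μ _) (measure_ne_top μ _)
    rw [← ENNReal.toReal_eq_toReal_iff' h1 h2, ENNReal.toReal_mul]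
    exact key
  rw [← this, Set.inter_assoc]


theorem ae_infinite_renewals (μ : Measure Ω) [IsProbabilityMeasure μ] (ℱ : Filtration ℕ mΩ)
    (hκ_stop : ∀ i n : ℕ, MeasurableSet[ℱ n] {ω | κ i ω ≤ (n : ℕ∞)})
    (hptop : ∀ i : ℕ, MeasurableSet {ω | κ i ω = ⊤})
    (hcore : ∀ (n : ℕ), 1 ≤ n → ∀ (A : Set Ω), MeasurableSet[ℱ (n - 1)] A →
      μ (A ∩ {ω | κ n ω = ⊤}) = μ A * μ {ω | κ 0 ω = ⊤})
    (h_iv : 0 < μ {ω | κ 0 ω = ⊤}) :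
    ∀ᵐ ω ∂μ, {n : ℕ | κ n ω = ⊤}.Infinite := by
  set c := μ {ω | κ 0 ω = ⊤} with hc
  set B : ℕ → Set Ω := fun m => {ω | ∀ j, m ≤ j → κ j ω ≠ ⊤} with hB
  have hBnull : ∀ m, μ (B m) = 0 := by
    intro m
    set U : ℕ → Set Ω := fun N => ⋂ j ∈ Finset.range (N + 1), {ω | κ (m + j) ω ≠ ⊤} with hU
    have hBU : ∀ N, B m ⊆ U N := by
      intro N ω hω
      simp only [hU, Set.mem_iInter, Set.mem_setOf_eq]
      intro j _
      exact hω (m + j) (Nat.le_add_right m j)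
    set AA : ℕ → ℕ → Set Ω := fun K N => ⋂ j ∈ Finset.range (N + 1), {ω | κ (m + j) ω ≤ (K : ℕ∞)}
      with hAA
    have hAAmeasF : ∀ K N, MeasurableSet[ℱ K] (AA K N) := by
      intro K N
      apply MeasurableSet.biInter (Finset.range (N + 1)).countable_toSet
      intro j _
      exact hκ_stop (m + j) K
    have hAAmeas : ∀ K N, MeasurableSet (AA K N) := fun K N => ℱ.le K _ (hAAmeasF K N)
    have hAAmono : ∀ N, Monotone (fun K => AA K N) := by
      intro N K K' hKK'
      apply Set.iInter₂_mono
      intro j _ ω hω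
      simp only [Set.mem_setOf_eq] at hω ⊢
      exact hω.trans (by exact_mod_cast hKK')
    have hAAU : ∀ N, (⋃ K, AA K N) = U N := by
      intro N
      ext ω
      simp only [Set.mem_iUnion, hAA, hU, Set.mem_iInter, Set.mem_setOf_eq]
      constructor
      · rintro ⟨K, hK⟩ j hj htop
        have := hK j hj
        rw [htop] at this
        exact (ENat.coe_ne_top K) (top_le_iff.mp (le_trans le_top this))
      · intro h
        have hfin : ∀ j ∈ Finset.range (N + 1), ∃ v : ℕ, κ (m + j) ω = (v : ℕ∞) := by
          intro j hj
          cases hv : κ (m + j) ω with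
          | top => exact absurd hv (h j hj)
          | coe v => exact ⟨v, rfl⟩
        choose v hv using hfin
        refine ⟨(Finset.range (N + 1)).attach.sup (fun j => v j.1 j.2), ?_⟩
        intro j hj
        rw [hv j hj]
        have hle : v j hj ≤ (Finset.range (N + 1)).attach.sup (fun j => v j.1 j.2) :=
          Finset.le_sup (f := fun j : {x // x ∈ Finset.range (N + 1)} => v j.1 j.2)
            (Finset.mem_attach _ ⟨j, hj⟩)
        exact_mod_cast hle
    have hkey : ∀ N K, m ≤ K → μ (AA K N ∩ B m) + c * μ (AA K N) ≤ μ (AA K N) := by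
      intro N K hmK
      have hdisj : Disjoint (AA K N ∩ B m) (AA K N ∩ {ω | κ (K + 1) ω = ⊤}) := by
        apply Set.disjoint_left.mpr
        rintro ω ⟨-, hωB⟩ ⟨-, hωp⟩
        exact hωB (K + 1) (le_trans hmK (Nat.le_succ K)) hωp
      have hcore' : μ (AA K N ∩ {ω | κ (K + 1) ω = ⊤}) = μ (AA K N) * c := by
        have := hcore (K + 1) (Nat.le_add_left 1 K) (AA K N) (by simpa using hAAmeasF K N)
        simpa using this
      calc μ (AA K N ∩ B m) + c * μ (AA K N)
          = μ (AA K N ∩ B m) + μ (AA K N ∩ {ω | κ (K + 1) ω = ⊤}) := by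
            rw [hcore', mul_comm]
        _ = μ ((AA K N ∩ B m) ∪ (AA K N ∩ {ω | κ (K + 1) ω = ⊤})) :=
            (measure_union hdisj ((hAAmeas K N).inter (hptop (K + 1)))).symm
        _ ≤ μ (AA K N) := measure_mono (by rintro ω (⟨h1, -⟩ | ⟨h1, -⟩) <;> exact h1)
    have hstep : ∀ N, μ (B m) + c * μ (U N) ≤ μ (U N) := by
      intro N
      have h2 : Tendsto (fun K => μ (AA K N)) atTop (𝓝 (μ (U N))) := by
        rw [← hAAU N]
        exact tendsto_measure_iUnion_atTop (hAAmono N)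
      have h1 : Tendsto (fun K => μ (AA K N ∩ B m)) atTop (𝓝 (μ (U N ∩ B m))) := by
        have : (⋃ K, AA K N ∩ B m) = U N ∩ B m := by
          rw [← Set.iUnion_inter, hAAU N]
        rw [← this]
        exact tendsto_measure_iUnion_atTop (fun K K' hKK' => Set.inter_subset_inter_left _
          (hAAmono N hKK'))
      have h3 : Tendsto (fun K => μ (AA K N ∩ B m) + c * μ (AA K N)) atTop
          (𝓝 (μ (U N ∩ B m) + c * μ (U N))) :=
        h1.add (ENNReal.Tendsto.const_mul h2 (Or.inr (measure_ne_top μ _)))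
      have hle := le_of_tendsto_of_tendsto h3 h2
        (eventually_atTop.mpr ⟨m, fun K hK => hkey N K hK⟩)
      rwa [Set.inter_eq_right.mpr (hBU N)] at hle
    have hUdec : Antitone U := by
      intro N N' hNN'
      intro ω hω
      simp only [hU, Set.mem_iInter, Finset.mem_range] at hω ⊢
      intro j hj
      exact hω j (by omega)

    have hUB : (⋂ N, U N) = B m := by
      ext ω
      simp only [Set.mem_iInter, hU, Set.mem_setOf_eq, hB]
      constructor
      · intro h j hj
        have := h (j - m) (j - m) (by simp)
        rwa [Nat.add_sub_cancel' hj] at this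
      · intro h N j _
        exact h (m + j) (Nat.le_add_right m j)
    have hUmeas : ∀ N, MeasurableSet (U N) := by
      intro N
      rw [← hAAU N]
      exact MeasurableSet.iUnion fun K => hAAmeas K N
    have hUlim : Tendsto (fun N => μ (U N)) atTop (𝓝 (μ (B m))) := by
      rw [← hUB]
      exact tendsto_measure_iInter_atTop (fun N => (hUmeas N).nullMeasurableSet) hUdec
        ⟨0, measure_ne_top μ _⟩
    have hfinal : μ (B m) + c * μ (B m) ≤ μ (B m) := by
      have h3 : Tendsto (fun N => μ (B m) + c * μ (U N)) atTop
          (𝓝 (μ (B m) + c * μ (B m))) :=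
        tendsto_const_nhds.add (ENNReal.Tendsto.const_mul hUlim (Or.inr (measure_ne_top μ _)))
      exact le_of_tendsto_of_tendsto' h3 hUlim hstep
    have : c * μ (B m) ≤ 0 := by
      have h' : μ (B m) + c * μ (B m) ≤ μ (B m) + 0 := by
        simpa using hfinal
      exact (ENNReal.add_le_add_iff_left (measure_ne_top μ (B m))).mp h'
    rcases mul_eq_zero.mp (nonpos_iff_eq_zero.mp this) with h | h
    · exact absurd h (ne_of_gt h_iv)
    · exact h
  have hsub : {ω | ¬ ({n : ℕ | κ n ω = ⊤}.Infinite)} ⊆ ⋃ m, B m := by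
    intro ω hω
    rw [Set.mem_setOf_eq, Set.not_infinite] at hω
    obtain ⟨b, hb⟩ := hω.bddAbove
    refine Set.mem_iUnion.mpr ⟨b + 1, ?_⟩
    intro j hj htop
    exact absurd (hb htop) (by omega)
  rw [ae_iff]
  exact measure_mono_null hsub (measure_iUnion_null fun m => hBnull m)


end Defs


section Defs2

variable {Ω E : Type*} [MeasurableSpace E]
variable (κ : ℕ → Ω → ℕ∞) (Y : ℕ → Ω → E)


/-- the `ℱ (n-1)`-measurable part of a piece: renewal pattern below `n = s (last)` -/
def Ebase (k : ℕ) (s : Fin (k + 1) → ℕ) : Set Ω :=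
  {ω | ∀ j < s (Fin.last k),
    (((s (Fin.last k) : ℕ) : ℕ∞) ≤ κ j ω ↔ ∃ i : Fin k, s i.castSucc = j)}

/-- the `ℱ (n-1)`-measurable part of a piece: the first `k` blocks -/
def Gbase (k : ℕ) (B : ℕ → Set (Σ m, Fin m → E)) (s : Fin (k + 1) → ℕ) : Set Ω :=
  {ω | ∀ i : Fin k,
    (⟨s i.succ - s i.castSucc, fun j => Y (s i.castSucc + (j : ℕ)) ω⟩ : Σ m, Fin m → E) ∈ B i}

variable {κ Y}

section Pointwise

variable {k : ℕ} {s : Fin (k + 1) → ℕ} {ω : Ω}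

theorem fact1 (h_ii : ∀ (m n : ℕ) (ω : Ω), m < n → (n : ℕ∞) ≤ κ m ω → κ n ω ≤ κ m ω)
    (hs : StrictMono s) (hE : ω ∈ Ebase κ k s)
    (hp : κ (s (Fin.last k)) ω = ⊤) :
    ∀ j ≤ s (Fin.last k), ((κ j ω = ⊤) ↔ ∃ i : Fin (k + 1), s i = j) := by
  intro j hj
  rcases eq_or_lt_of_le hj with heq | hlt
  · constructor
    · intro _; exact ⟨Fin.last k, heq.symm⟩
    · intro _; rw [heq]; exact hp
  · constructor
    · intro htop
      obtain ⟨i, hi⟩ := (hE j hlt).mp (by rw [htop]; exact le_top)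
      exact ⟨i.castSucc, hi⟩
    · rintro ⟨i, rfl⟩
      have hne : i ≠ Fin.last k := by
        intro h; rw [h] at hlt; exact lt_irrefl _ hlt
      obtain ⟨i', rfl⟩ := Fin.exists_castSucc_eq.mpr hne
      have hle : ((s (Fin.last k) : ℕ) : ℕ∞) ≤ κ (s i'.castSucc) ω :=
        (hE _ hlt).mpr ⟨i', rfl⟩
      have := h_ii (s i'.castSucc) (s (Fin.last k)) ω hlt hle
      rw [hp] at this
      exact top_le_iff.mp this

theorem enum_of_piece (h_ii : ∀ (m n : ℕ) (ω : Ω), m < n → (n : ℕ∞) ≤ κ m ω → κ n ω ≤ κ m ω)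
    (hs : StrictMono s) (hE : ω ∈ Ebase κ k s)
    (hp : κ (s (Fin.last k)) ω = ⊤) (i : Fin (k + 1)) :
    Nat.nth (fun n => κ n ω = ⊤) (i : ℕ) = s i :=
  nth_enum _ s hs (fact1 h_ii hs hE hp) i

theorem count_of_piece (h_ii : ∀ (m n : ℕ) (ω : Ω), m < n → (n : ℕ∞) ≤ κ m ω → κ n ω ≤ κ m ω)
    [DecidablePred (fun n => κ n ω = ⊤)] (hs : StrictMono s)
    (hE : ω ∈ Ebase κ k s)
    (hp : κ (s (Fin.last k)) ω = ⊤) (i : Fin (k + 1)) :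
    Nat.count (fun n => κ n ω = ⊤) (s i) = (i : ℕ) :=
  count_enum _ s hs (fact1 h_ii hs hE hp) i

theorem blockSeq_congr (x : ℕ → E × ℕ∞) (p : ℕ → Prop) (hp : ∀ r, ((x r).2 = ⊤) ↔ p r) (i : ℕ) :
    blockSeq x i
      = ⟨Nat.nth p (i + 1) - Nat.nth p i, fun j => (x (Nat.nth p i + (j : ℕ))).1⟩ := by
  have h : (fun r => (x r).2 = ⊤) = p := funext fun r => propext (hp r)
  unfold blockSeq
  rw [h]

/-- identification of the shifted block sequence -/
theorem blk_shift {n : ℕ} [DecidablePred (fun m => κ m ω = ⊤)]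
    (hinf : {m : ℕ | κ m ω = ⊤}.Infinite)
    (hpn : κ n ω = ⊤) (hcn : Nat.count (fun m => κ m ω = ⊤) n = k) :
    (fun i => blk κ Y (k + i) ω) = blockSeq (fun r => Xseq κ Y ω (n + r)) := by
  have hq : (fun r => (Xseq κ Y ω (n + r)).2 = ⊤) = fun r => κ (n + r) ω = ⊤ := by
    funext r
    exact propext (enat_sub_eq_top_iff (κ (n + r) ω) (n + r))
  funext i
  show blk κ Y (k + i) ω = blockSeq (fun r => Xseq κ Y ω (n + r)) i
  rw [blockSeq_congr (fun r => Xseq κ Y ω (n + r)) (fun r => κ (n + r) ω = ⊤)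
    (fun r => enat_sub_eq_top_iff (κ (n + r) ω) (n + r)) i]
  unfold blk
  have h1 := nth_shift hinf hpn hcn i
  have h2 := nth_shift hinf hpn hcn (i + 1)
  apply sigma_mk_eq
  · rw [show k + i + 1 = k + (i + 1) from rfl, h1, h2, Nat.add_sub_add_left]
  · intro j hj1 hj2
    show Y (Nat.nth (fun m => κ m ω = ⊤) (k + i) + j) ω
      = (Xseq κ Y ω (n + (Nat.nth (fun r => κ (n + r) ω = ⊤) i + j))).1
    rw [h1, Nat.add_assoc]
    rfl


end Pointwise

end Defs2


section Defs3

variable {Ω E : Type*} [MeasurableSpace E]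
variable (κ : ℕ → Ω → ℕ∞) (Y : ℕ → Ω → E)


def piece (k : ℕ) (B : ℕ → Set (Σ m, Fin m → E)) (D : Set (ℕ → Σ m, Fin m → E))
    (s : Fin (k + 1) → ℕ) : Set Ω :=
  (Ebase κ k s ∩ Gbase Y k B s)
    ∩ {ω | blockSeq (fun r => Xseq κ Y ω (s (Fin.last k) + r)) ∈ D}
    ∩ {ω | κ (s (Fin.last k)) ω = ⊤}


end Defs3

section Pieces

variable {Ω E : Type*} [MeasurableSpace E] {mΩ : MeasurableSpace Ω}
variable {κ : ℕ → Ω → ℕ∞} {Y : ℕ → Ω → E}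
variable {k : ℕ} {B : ℕ → Set (Σ m, Fin m → E)} {D : Set (ℕ → Σ m, Fin m → E)}

/-- coverage: every `ω` with infinitely many renewals belonging to the big event
belongs to some piece -/
theorem mem_piece_of
    (h_ii : ∀ (m n : ℕ) (ω : Ω), m < n → (n : ℕ∞) ≤ κ m ω → κ n ω ≤ κ m ω)
    {ω : Ω} (hinf : {n : ℕ | κ n ω = ⊤}.Infinite)
    (hW1 : ∀ i < k, blk κ Y i ω ∈ B i) (hW2 : (fun i => blk κ Y (k + i) ω) ∈ D) :
    ∃ s : Fin (k + 1) → ℕ, StrictMono s ∧ ω ∈ piece (κ := κ) (Y := Y) k B D s := by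
  set pat : ℕ → Prop := fun n => κ n ω = ⊤ with hpat
  set s : Fin (k + 1) → ℕ := fun i => Nat.nth pat (i : ℕ) with hsdef
  have hs : StrictMono s := by
    intro a b hab
    exact (Nat.nth_lt_nth hinf).mpr (by exact_mod_cast hab)
  have hpn : pat (Nat.nth pat k) := Nat.nth_mem_of_infinite hinf k
  have hcn : Nat.count pat (Nat.nth pat k) = k := Nat.count_nth_of_infinite hinf k
  have hlast : s (Fin.last k) = Nat.nth pat k := by
    simp [hsdef, Fin.val_last]
  refine ⟨s, hs, ⟨⟨?_, ?_⟩, ?_⟩, ?_⟩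
  · -- Ebase
    intro j hj
    rw [hlast] at hj
    constructor
    · intro hle
      rw [hlast] at hle
      have hpj : pat j := by
        have h2 := h_ii j (Nat.nth pat k) ω hj hle
        rw [hpn] at h2
        exact top_le_iff.mp h2
      have hcj : Nat.count pat j < k := by
        have := Nat.count_strict_mono hpj hj
        rwa [hcn] at this
      exact ⟨⟨Nat.count pat j, hcj⟩, Nat.nth_count hpj⟩
    · rintro ⟨i, rfl⟩
      have : pat (s i.castSucc) := Nat.nth_mem_of_infinite hinf _
      rw [this]
      exact le_top
  · -- Gbase
    intro i
    exact hW1 (i : ℕ) i.2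
  · -- D part
    show blockSeq (fun r => Xseq κ Y ω (s (Fin.last k) + r)) ∈ D
    rw [hlast, ← blk_shift hinf hpn hcn]
    exact hW2
  · -- renewal at the top
    show κ (s (Fin.last k)) ω = ⊤
    rw [hlast]
    exact hpn

/-- membership in a piece implies membership in the big event -/
theorem w_of_piece
    (h_ii : ∀ (m n : ℕ) (ω : Ω), m < n → (n : ℕ∞) ≤ κ m ω → κ n ω ≤ κ m ω)
    {ω : Ω} (hinf : {n : ℕ | κ n ω = ⊤}.Infinite) {s : Fin (k + 1) → ℕ} (hs : StrictMono s)
    (hω : ω ∈ piece (κ := κ) (Y := Y) k B D s) :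
    (∀ i < k, blk κ Y i ω ∈ B i) ∧ (fun i => blk κ Y (k + i) ω) ∈ D := by
  obtain ⟨⟨⟨hE, hG⟩, hD⟩, hp⟩ := hω
  have hp' : κ (s (Fin.last k)) ω = ⊤ := hp
  have henum := enum_of_piece h_ii hs hE hp'
  constructor
  · intro i hik
    have e0 : Nat.nth (fun n => κ n ω = ⊤) i = s (Fin.castSucc ⟨i, hik⟩) :=
      henum ⟨i, Nat.lt_succ_of_lt hik⟩
    have e1 : Nat.nth (fun n => κ n ω = ⊤) (i + 1) = s (Fin.succ ⟨i, hik⟩) :=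
      henum ⟨i + 1, Nat.succ_lt_succ hik⟩
    have hblk : blk κ Y i ω
        = ⟨s (Fin.succ ⟨i, hik⟩) - s (Fin.castSucc ⟨i, hik⟩),
            fun j => Y (s (Fin.castSucc ⟨i, hik⟩) + (j : ℕ)) ω⟩ := by
      unfold blk
      rw [e0, e1]
    rw [hblk]
    exact hG ⟨i, hik⟩
  · have hcn : Nat.count (fun n => κ n ω = ⊤) (s (Fin.last k)) = k := by
      have := count_of_piece h_ii hs hE hp' (Fin.last k)
      rwa [Fin.val_last] at this
    rw [blk_shift hinf hp' hcn]
    exact hD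

/-- pieces with different parameters are disjoint -/
theorem piece_eq_of_mem
    (h_ii : ∀ (m n : ℕ) (ω : Ω), m < n → (n : ℕ∞) ≤ κ m ω → κ n ω ≤ κ m ω)
    {ω : Ω} {s s' : Fin (k + 1) → ℕ} (hs : StrictMono s) (hs' : StrictMono s')
    (hω : ω ∈ piece (κ := κ) (Y := Y) k B D s)
    (hω' : ω ∈ piece (κ := κ) (Y := Y) k B D s') : s = s' := by
  obtain ⟨⟨⟨hE, -⟩, -⟩, hp⟩ := hω
  obtain ⟨⟨⟨hE', -⟩, -⟩, hp'⟩ := hω'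
  have hp1 : κ (s (Fin.last k)) ω = ⊤ := hp
  have hp1' : κ (s' (Fin.last k)) ω = ⊤ := hp'
  have hc : Nat.count (fun n => κ n ω = ⊤) (s (Fin.last k)) = k := by
    have := count_of_piece h_ii hs hE hp1 (Fin.last k); rwa [Fin.val_last] at this
  have hc' : Nat.count (fun n => κ n ω = ⊤) (s' (Fin.last k)) = k := by
    have := count_of_piece h_ii hs' hE' hp1' (Fin.last k); rwa [Fin.val_last] at this
  have hnn : s (Fin.last k) = s' (Fin.last k) := by
    rcases lt_trichotomy (s (Fin.last k)) (s' (Fin.last k)) with h | h | h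
    · exfalso
      have := Nat.count_strict_mono (p := fun n => κ n ω = ⊤) hp1 h
      rw [hc, hc'] at this
      exact lt_irrefl _ this
    · exact h
    · exfalso
      have := Nat.count_strict_mono (p := fun n => κ n ω = ⊤) hp1' h
      rw [hc, hc'] at this
      exact lt_irrefl _ this
  funext i
  rw [← enum_of_piece h_ii hs hE hp1 i, ← enum_of_piece h_ii hs' hE' hp1' i]


end Pieces

theorem measurable_pi_lambda' {α δ : Type*} {π : δ → Type*} (m' : MeasurableSpace α)
    [∀ a, MeasurableSpace (π a)] (f : α → ∀ a, π a)
    (hf : ∀ a, @Measurable _ _ m' _ (fun c => f c a)) : @Measurable _ _ m' _ f := by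
  letI := m'
  exact measurable_pi_lambda f hf

section Meas

variable {Ω E : Type*} [MeasurableSpace E] {mΩ : MeasurableSpace Ω}
variable {κ : ℕ → Ω → ℕ∞} {Y : ℕ → Ω → E}
variable {k : ℕ} {B : ℕ → Set (Σ m, Fin m → E)} {D : Set (ℕ → Σ m, Fin m → E)}
variable {s : Fin (k + 1) → ℕ}

theorem Ebase_meas {m' : MeasurableSpace Ω}
    (h : ∀ j, MeasurableSet[m'] {ω | ((s (Fin.last k) : ℕ) : ℕ∞) ≤ κ j ω}) :
    MeasurableSet[m'] (Ebase κ k s) := by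
  have hE : Ebase κ k s = ⋂ j ∈ Finset.range (s (Fin.last k)),
      {ω | (((s (Fin.last k) : ℕ) : ℕ∞) ≤ κ j ω ↔ ∃ i : Fin k, s i.castSucc = j)} := by
    ext ω
    simp only [Ebase, Set.mem_setOf_eq, Set.mem_iInter, Finset.mem_range]
  rw [hE]
  apply MeasurableSet.biInter (Finset.range (s (Fin.last k))).countable_toSet
  intro j _
  by_cases hQ : ∃ i : Fin k, s i.castSucc = j
  · have : {ω : Ω | (((s (Fin.last k) : ℕ) : ℕ∞) ≤ κ j ω ↔ ∃ i : Fin k, s i.castSucc = j)}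
        = {ω | ((s (Fin.last k) : ℕ) : ℕ∞) ≤ κ j ω} := by
      ext ω; simp [hQ]
    rw [this]; exact h j
  · have : {ω : Ω | (((s (Fin.last k) : ℕ) : ℕ∞) ≤ κ j ω ↔ ∃ i : Fin k, s i.castSucc = j)}
        = {ω | ((s (Fin.last k) : ℕ) : ℕ∞) ≤ κ j ω}ᶜ := by
      ext ω; simp [hQ]
    rw [this]; exact (h j).compl

theorem Gbase_meas {m' : MeasurableSpace Ω} (hB : ∀ i, MeasurableSet (B i))
    (h : ∀ i : Fin k, Measurable[m']
      (fun ω => (fun j : Fin (s i.succ - s i.castSucc) => Y (s i.castSucc + (j : ℕ)) ω))) :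
    MeasurableSet[m'] (Gbase Y k B s) := by
  have hG : Gbase Y k B s = ⋂ i : Fin k,
      (fun ω => (fun j : Fin (s i.succ - s i.castSucc) => Y (s i.castSucc + (j : ℕ)) ω)) ⁻¹'
        ((@Sigma.mk ℕ (fun m => Fin m → E) (s i.succ - s i.castSucc)) ⁻¹' (B i)) := by
    ext ω
    simp only [Gbase, Set.mem_setOf_eq, Set.mem_iInter, Set.mem_preimage]
  rw [hG]
  exact MeasurableSet.iInter fun i => (h i) (measurable_sigma_mk'' _ (hB i))

theorem EG_measF (ℱ : Filtration ℕ mΩ)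
    (hκ_stop : ∀ i n : ℕ, MeasurableSet[ℱ n] {ω | κ i ω ≤ (n : ℕ∞)})
    (hY_adapted : ∀ n, Measurable[ℱ n] (Y n))
    (hs : StrictMono s) (hn : 1 ≤ s (Fin.last k)) (hB : ∀ i, MeasurableSet (B i)) :
    MeasurableSet[ℱ (s (Fin.last k) - 1)] (Ebase κ k s ∩ Gbase Y k B s) := by
  set n := s (Fin.last k) with hndef
  apply MeasurableSet.inter
  · apply Ebase_meas
    intro j
    have h1 := (hκ_stop j (n - 1)).compl
    have h2 : {ω | κ j ω ≤ ((n - 1 : ℕ) : ℕ∞)}ᶜ = {ω | ((n : ℕ) : ℕ∞) ≤ κ j ω} := by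
      ext ω
      simp only [Set.mem_compl_iff, Set.mem_setOf_eq]
      rw [enat_le_sub_one_iff _ n hn]
      exact not_not
    rwa [h2] at h1
  · apply Gbase_meas hB
    intro i
    refine measurable_pi_lambda' (ℱ (n - 1)) _ fun j => ?_
    have hj : (j : ℕ) < s i.succ - s i.castSucc := j.2
    have h1 : s i.castSucc < s i.succ := hs Fin.castSucc_lt_succ
    have h2 : s i.succ ≤ n := hs.monotone (Fin.le_last i.succ)
    have hle : s i.castSucc + (j : ℕ) ≤ n - 1 := by omega
    exact Measurable.mono (hY_adapted _) (ℱ.mono hle) le_rfl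

theorem piece_meas (hκ : ∀ i, Measurable (κ i)) (hY : ∀ n, Measurable (Y n))
    (hB : ∀ i, MeasurableSet (B i)) (hD : MeasurableSet D) :
    MeasurableSet (piece (κ := κ) (Y := Y) k B D s) := by
  have hEm : MeasurableSet (Ebase κ k s) :=
    Ebase_meas fun j =>
      (hκ j) (MeasurableSet.of_discrete (s := Set.Ici ((s (Fin.last k) : ℕ) : ℕ∞)))
  have hGm : MeasurableSet (Gbase Y k B s) :=
    Gbase_meas hB fun i => measurable_pi_lambda _ fun j => hY _
  have hDm : MeasurableSet {ω | blockSeq (fun r => Xseq κ Y ω (s (Fin.last k) + r)) ∈ D} := by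
    have hmap : Measurable (fun ω => blockSeq (fun r => Xseq κ Y ω (s (Fin.last k) + r))) := by
      apply Measurable.comp (g := fun x : ℕ → E × ℕ∞ => blockSeq x)
      · exact measurable_pi_lambda _ fun i => measurable_blockSeq i
      · exact measurable_pi_lambda _ fun r =>
          (measurable_pi_apply _).comp (measurable_Xseq κ Y hκ hY)
    exact hmap hD
  have hpm : MeasurableSet {ω | κ (s (Fin.last k)) ω = ⊤} :=
    (hκ _) (MeasurableSet.singleton ⊤)
  exact ((hEm.inter hGm).inter hDm).inter hpm

theorem W1_meas (hκ : ∀ i, Measurable (κ i)) (hY : ∀ n, Measurable (Y n))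
    (hB : ∀ i, MeasurableSet (B i)) :
    MeasurableSet {ω : Ω | ∀ i < k, blk κ Y i ω ∈ B i} := by
  have : {ω : Ω | ∀ i < k, blk κ Y i ω ∈ B i}
      = ⋂ i ∈ Finset.range k, (blk κ Y i) ⁻¹' (B i) := by
    ext ω
    simp only [Set.mem_setOf_eq, Set.mem_iInter, Finset.mem_range, Set.mem_preimage]
  rw [this]
  exact MeasurableSet.biInter (Finset.range k).countable_toSet
    fun i _ => (measurable_blk κ Y hκ hY i) (hB i)

theorem W2_meas (hκ : ∀ i, Measurable (κ i)) (hY : ∀ n, Measurable (Y n))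
    (hD : MeasurableSet D) :
    MeasurableSet {ω : Ω | (fun i => blk κ Y (k + i) ω) ∈ D} :=
  (measurable_pi_lambda _ fun i => measurable_blk κ Y hκ hY (k + i)) hD

end Meas

section Decomp

variable {Ω E : Type*} [MeasurableSpace E] {mΩ : MeasurableSpace Ω}
variable {κ : ℕ → Ω → ℕ∞} {Y : ℕ → Ω → E}

theorem decomp (μ : Measure Ω) [IsProbabilityMeasure μ] (ℱ : Filtration ℕ mΩ)
    (h_ii : ∀ (m n : ℕ) (ω : Ω), m < n → (n : ℕ∞) ≤ κ m ω → κ n ω ≤ κ m ω)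
    (hκ_stop : ∀ i n : ℕ, MeasurableSet[ℱ n] {ω | κ i ω ≤ (n : ℕ∞)})
    (hY_adapted : ∀ n, Measurable[ℱ n] (Y n))
    (hκ : ∀ i, Measurable (κ i)) (hY : ∀ n, Measurable (Y n))
    (hcore : ∀ (n : ℕ), 1 ≤ n → ∀ (A : Set Ω), MeasurableSet[ℱ (n - 1)] A →
      ∀ (C : Set (ℕ → E × ℕ∞)), MeasurableSet C →
      μ (A ∩ {ω | (fun k => Xseq κ Y ω (n + k)) ∈ C} ∩ {ω | κ n ω = ⊤})
        = μ A * μ ({ω | Xseq κ Y ω ∈ C} ∩ {ω | κ 0 ω = ⊤}))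
    (hInf : μ {ω | ¬ ({n : ℕ | κ n ω = ⊤}.Infinite)} = 0)
    (k : ℕ) (B : ℕ → Set (Σ m, Fin m → E)) (hB : ∀ i, MeasurableSet (B i))
    (D : Set (ℕ → Σ m, Fin m → E)) (hD : MeasurableSet D) :
    μ ({ω | ∀ i < k, blk κ Y i ω ∈ B i} ∩ {ω | (fun i => blk κ Y (k + i) ω) ∈ D})
      = (∑' s : {s : Fin (k + 1) → ℕ // StrictMono s},
          μ (Ebase κ k s.1 ∩ Gbase Y k B s.1))
        * μ ({ω | blockSeq (Xseq κ Y ω) ∈ D} ∩ {ω | κ 0 ω = ⊤}) := by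
  set W : Set Ω := {ω | ∀ i < k, blk κ Y i ω ∈ B i} ∩ {ω | (fun i => blk κ Y (k + i) ω) ∈ D}
    with hWdef
  set P : {s : Fin (k + 1) → ℕ // StrictMono s} → Set Ω :=
    fun s => piece (κ := κ) (Y := Y) k B D s.1 with hPdef
  -- step 1 : μ W = μ (⋃ P)
  have h1 : μ W = μ (⋃ s, P s) := by
    apply measure_congr
    rw [MeasureTheory.ae_eq_set]
    constructor
    · apply measure_mono_null _ hInf
      intro ω hω
      simp only [Set.mem_diff, Set.mem_iUnion, not_exists] at hω
      obtain ⟨⟨hW1, hW2⟩, hnot⟩ := hω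
      simp only [Set.mem_setOf_eq]
      intro hinf
      obtain ⟨s, hs, hmem⟩ := mem_piece_of h_ii hinf hW1 hW2
      exact hnot ⟨s, hs⟩ hmem
    · apply measure_mono_null _ hInf
      intro ω hω
      simp only [Set.mem_diff, Set.mem_iUnion] at hω
      obtain ⟨⟨s, hmem⟩, hnot⟩ := hω
      simp only [Set.mem_setOf_eq]
      intro hinf
      obtain ⟨hW1, hW2⟩ := w_of_piece h_ii hinf s.2 hmem
      exact hnot ⟨hW1, hW2⟩
  -- step 2 : μ (⋃ P) = ∑' μ (P s)
  have h2 : μ (⋃ s, P s) = ∑' s, μ (P s) := by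
    apply measure_iUnion
    · intro s s' hne
      rw [Function.onFun]
      apply Set.disjoint_left.mpr
      intro ω h h'
      exact hne (Subtype.ext (piece_eq_of_mem h_ii s.2 s'.2 h h'))
    · intro s
      exact piece_meas hκ hY hB hD
  -- step 3 : per piece
  have h3 : ∀ s : {s : Fin (k + 1) → ℕ // StrictMono s},
      μ (P s) = μ (Ebase κ k s.1 ∩ Gbase Y k B s.1)
        * μ ({ω | blockSeq (Xseq κ Y ω) ∈ D} ∩ {ω | κ 0 ω = ⊤}) := by
    rintro ⟨s, hs⟩
    rcases Nat.eq_zero_or_pos (s (Fin.last k)) with hn0 | hn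
    · -- top value 0 forces k = 0 and the piece starts at time 0
      have hk0 : k = 0 := by
        by_contra hk
        have hlt : (0 : Fin (k + 1)) < Fin.last k := by
          rw [Fin.lt_def]
          simp only [Fin.val_last, Fin.val_zero]
          omega
        have := hs hlt
        omega
      subst hk0
      have hXid : ∀ ω : Ω, (fun r => Xseq κ Y ω (s (Fin.last 0) + r)) = Xseq κ Y ω := by
        intro ω
        funext r
        rw [hn0, Nat.zero_add]
      have hE : Ebase κ 0 s = Set.univ := by
        ext ω
        simp only [Ebase, Set.mem_setOf_eq, Set.mem_univ, iff_true]
        intro j hj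
        rw [hn0] at hj
        omega
      have hG : Gbase Y 0 B s = Set.univ := by
        ext ω
        simp only [Gbase, Set.mem_setOf_eq, Set.mem_univ, iff_true]
        intro i
        exact i.elim0
      have hPs : P ⟨s, hs⟩ = {ω | blockSeq (Xseq κ Y ω) ∈ D} ∩ {ω | κ 0 ω = ⊤} := by
        show piece (κ := κ) (Y := Y) 0 B D s = _
        unfold piece
        rw [hE, hG]
        have hMem : {ω : Ω | blockSeq (fun r => Xseq κ Y ω (s (Fin.last 0) + r)) ∈ D}
            = {ω | blockSeq (Xseq κ Y ω) ∈ D} := by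
          ext ω
          simp only [Set.mem_setOf_eq]
          rw [hXid ω]
        have hTop : {ω : Ω | κ (s (Fin.last 0)) ω = ⊤} = {ω | κ 0 ω = ⊤} := by
          rw [hn0]
        rw [hMem, hTop, Set.univ_inter, Set.univ_inter]
      rw [hPs, hE, hG, Set.univ_inter, measure_univ, one_mul]
    · -- general case : use the core lemma
      have hC : MeasurableSet {x : ℕ → E × ℕ∞ | blockSeq x ∈ D} :=
        (measurable_pi_lambda _ fun i => measurable_blockSeq i) hD
      have := hcore (s (Fin.last k)) hn (Ebase κ k s ∩ Gbase Y k B s)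
        (EG_measF ℱ hκ_stop hY_adapted hs hn hB) {x | blockSeq x ∈ D} hC
      exact this
  rw [h1, h2, tsum_congr h3, ENNReal.tsum_mul_right]


end Decomp


section Main

variable {Ω E : Type*} [MeasurableSpace E] {mΩ : MeasurableSpace Ω}


theorem blk_zero_eq (κ : ℕ → Ω → ℕ∞) (Y : ℕ → Ω → E) (ω : Ω) (hp0 : κ 0 ω = ⊤) :
    blk κ Y 0 ω = ⟨Nat.nth (fun n => κ n ω = ⊤) 1, fun j => Y (j : ℕ) ω⟩ := by
  have h0 : Nat.nth (fun n => κ n ω = ⊤) 0 = 0 := Nat.nth_zero_of_zero hp0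
  unfold blk
  apply sigma_mk_eq
  · rw [h0, Nat.sub_zero]
  · intro j h1 h2
    show Y (Nat.nth (fun n => κ n ω = ⊤) 0 + j) ω = Y j ω
    rw [h0, Nat.zero_add]


end Main

end RenewalAux


open MeasureTheory ProbabilityTheory Set Filter

theorem renewal_lemma_iid_blocks
    {Ω E : Type*} {mΩ : MeasurableSpace Ω} [MeasurableSpace E]
    (μ : Measure Ω) [IsProbabilityMeasure μ]
    (ℱ : Filtration ℕ mΩ)
    (κ : ℕ → Ω → ℕ∞) (Y : ℕ → Ω → E)
    (hκ_stop : ∀ i n : ℕ, MeasurableSet[ℱ n] {ω | κ i ω ≤ (n : ℕ∞)})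
    (hY_adapted : ∀ n : ℕ, Measurable[ℱ n] (Y n))
    (h_i : ∀ (n : ℕ) (ω : Ω), (n : ℕ∞) ≤ κ n ω)
    (h_ii : ∀ (m n : ℕ) (ω : Ω), m < n → (n : ℕ∞) ≤ κ m ω → κ n ω ≤ κ m ω)
    (h_iii : ∀ g : (ℕ → E × ℕ∞) → ℝ, Measurable g → (∃ Cg : ℝ, ∀ x, |g x| ≤ Cg) →
      ∀ n : ℕ, 1 ≤ n →
      μ[fun ω => g (fun k => (Y (n + k) ω, κ (n + k) ω - ((n + k : ℕ) : ℕ∞)))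
            * ({ω' | κ n ω' = ⊤}.indicator (fun _ => (1 : ℝ)) ω) | ℱ (n - 1)]
        =ᵐ[μ] fun _ => ∫ ω, g (fun k => (Y k ω, κ k ω - ((k : ℕ) : ℕ∞)))
            * ({ω' | κ 0 ω' = ⊤}.indicator (fun _ => (1 : ℝ)) ω) ∂μ)
    (h_iv : 0 < μ {ω | κ 0 ω = ⊤}) :
    (∀ᵐ ω ∂μ, {n : ℕ | κ n ω = ⊤}.Infinite) ∧
    (iIndepFun
        (fun (k : ℕ) (ω : Ω) =>
          (⟨Nat.nth (fun n => κ n ω = ⊤) (k + 1) - Nat.nth (fun n => κ n ω = ⊤) k,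
            fun j => Y (Nat.nth (fun n => κ n ω = ⊤) k + (j : ℕ)) ω⟩ :
              Σ m : ℕ, Fin m → E)) μ) ∧
    (∀ k : ℕ,
      Measure.map
          (fun ω : Ω =>
            (⟨Nat.nth (fun n => κ n ω = ⊤) (k + 1) - Nat.nth (fun n => κ n ω = ⊤) k,
              fun j => Y (Nat.nth (fun n => κ n ω = ⊤) k + (j : ℕ)) ω⟩ :
                Σ m : ℕ, Fin m → E)) μ
        = Measure.map
            (fun ω : Ω =>
              (⟨Nat.nth (fun n => κ n ω = ⊤) 1, fun j => Y (j : ℕ) ω⟩ :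
                Σ m : ℕ, Fin m → E))
            (μ[|{ω | κ 0 ω = ⊤}])) := by
  classical
  have hκ : ∀ i, Measurable (κ i) :=
    fun i => RenewalAux.measurable_kappa κ (fun n => ℱ.le n _ (hκ_stop i n))
  have hY : ∀ n, Measurable (Y n) := fun n => (hY_adapted n).mono (ℱ.le n) le_rfl
  have hptop : ∀ i, MeasurableSet {ω | κ i ω = ⊤} :=
    fun i => (hκ i) (MeasurableSet.singleton ⊤)
  have hcore : ∀ (n : ℕ), 1 ≤ n → ∀ (A : Set Ω), MeasurableSet[ℱ (n - 1)] A →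
      ∀ (C : Set (ℕ → E × ℕ∞)), MeasurableSet C →
      μ (A ∩ {ω | (fun k => RenewalAux.Xseq κ Y ω (n + k)) ∈ C} ∩ {ω | κ n ω = ⊤})
        = μ A * μ ({ω | RenewalAux.Xseq κ Y ω ∈ C} ∩ {ω | κ 0 ω = ⊤}) :=
    fun n hn A hA C hC => RenewalAux.core κ Y μ ℱ h_iii hκ hY n hn A hA C hC
  have hcore1 : ∀ (n : ℕ), 1 ≤ n → ∀ (A : Set Ω), MeasurableSet[ℱ (n - 1)] A →
      μ (A ∩ {ω | κ n ω = ⊤}) = μ A * μ {ω | κ 0 ω = ⊤} := by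
    intro n hn A hA
    have h := hcore n hn A hA Set.univ MeasurableSet.univ
    simpa using h
  have hae := RenewalAux.ae_infinite_renewals κ μ ℱ hκ_stop hptop hcore1 h_iv
  have hInf : μ {ω | ¬ ({n : ℕ | κ n ω = ⊤}.Infinite)} = 0 := ae_iff.mp hae
  set c := μ {ω | κ 0 ω = ⊤} with hcdef
  have hc0 : c ≠ 0 := ne_of_gt h_iv
  have hctop : c ≠ ⊤ := measure_ne_top μ _
  have hstar := RenewalAux.decomp μ ℱ h_ii hκ_stop hY_adapted hκ hY hcore hInf
  -- identify the canonical block sequence with the actual blocks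
  have hblockid : ∀ D : Set (ℕ → Σ m : ℕ, Fin m → E),
      {ω | RenewalAux.blockSeq (RenewalAux.Xseq κ Y ω) ∈ D}
        = {ω | (fun i => RenewalAux.blk κ Y i ω) ∈ D} := by
    intro D
    ext ω
    simp only [Set.mem_setOf_eq]
    rw [RenewalAux.blockSeq_Xseq]
  -- the product formula
  have hprod : ∀ (k : ℕ) (B : ℕ → Set (Σ m : ℕ, Fin m → E)), (∀ i, MeasurableSet (B i)) →
      μ {ω | ∀ i < k, RenewalAux.blk κ Y i ω ∈ B i}
        = ∏ i ∈ Finset.range k,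
            (c⁻¹ * μ ({ω | RenewalAux.blk κ Y 0 ω ∈ B i} ∩ {ω | κ 0 ω = ⊤})) := by
    intro k
    induction k with
    | zero =>
      intro B hB
      have : {ω : Ω | ∀ i < 0, RenewalAux.blk κ Y i ω ∈ B i} = Set.univ := by
        ext ω; simp
      rw [this]
      simp
    | succ k ih =>
      intro B hB
      have hWsucc : {ω : Ω | ∀ i < k + 1, RenewalAux.blk κ Y i ω ∈ B i}
          = {ω | ∀ i < k, RenewalAux.blk κ Y i ω ∈ B i}
            ∩ {ω | (fun i => RenewalAux.blk κ Y (k + i) ω)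
                ∈ {x : ℕ → Σ m : ℕ, Fin m → E | x 0 ∈ B k}} := by
        ext ω
        simp only [Set.mem_inter_iff, Set.mem_setOf_eq]
        constructor
        · intro h
          exact ⟨fun i hi => h i (by omega), h k (by omega)⟩
        · rintro ⟨h1, h2⟩ i hi
          rcases Nat.lt_succ_iff_lt_or_eq.mp hi with h | rfl
          · exact h1 i h
          · exact h2
      have hD : MeasurableSet {x : ℕ → Σ m : ℕ, Fin m → E | x 0 ∈ B k} :=
        (measurable_pi_apply 0) (hB k)
      have hstep := hstar k B hB {x | x 0 ∈ B k} hD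
      have huniv := hstar k B hB Set.univ MeasurableSet.univ
      have huniv' : μ {ω | ∀ i < k, RenewalAux.blk κ Y i ω ∈ B i}
          = (∑' s : {s : Fin (k + 1) → ℕ // StrictMono s},
              μ (RenewalAux.Ebase κ k s.1 ∩ RenewalAux.Gbase Y k B s.1)) * c := by
        have e1 : {ω : Ω | (fun i => RenewalAux.blk κ Y (k + i) ω) ∈ (Set.univ :
            Set (ℕ → Σ m : ℕ, Fin m → E))} = Set.univ := by
          ext ω; simp
        have e2 : {ω : Ω | RenewalAux.blockSeq (RenewalAux.Xseq κ Y ω) ∈ (Set.univ :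
            Set (ℕ → Σ m : ℕ, Fin m → E))} = Set.univ := by
          ext ω; simp
        rw [e1, e2, Set.inter_univ, Set.univ_inter] at huniv
        exact huniv
      have htsum : (∑' s : {s : Fin (k + 1) → ℕ // StrictMono s},
          μ (RenewalAux.Ebase κ k s.1 ∩ RenewalAux.Gbase Y k B s.1))
          = μ {ω | ∀ i < k, RenewalAux.blk κ Y i ω ∈ B i} * c⁻¹ := by
        rw [huniv', mul_assoc, ENNReal.mul_inv_cancel hc0 hctop, mul_one]
      rw [hWsucc, hstep, htsum, hblockid]
      have hD0 : {ω : Ω | (fun i => RenewalAux.blk κ Y i ω)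
          ∈ {x : ℕ → Σ m : ℕ, Fin m → E | x 0 ∈ B k}}
          = {ω | RenewalAux.blk κ Y 0 ω ∈ B k} := rfl
      rw [hD0, ih B hB, Finset.prod_range_succ, mul_assoc, mul_comm c⁻¹ _]
  -- marginal distribution of a single block
  have hmarg : ∀ (k : ℕ) (B : Set (Σ m : ℕ, Fin m → E)), MeasurableSet B →
      μ ((RenewalAux.blk κ Y k) ⁻¹' B)
        = c⁻¹ * μ ({ω | RenewalAux.blk κ Y 0 ω ∈ B} ∩ {ω | κ 0 ω = ⊤}) := by
    intro k B hB
    set B' : ℕ → Set (Σ m : ℕ, Fin m → E) := fun i => if i = k then B else Set.univ with hB'def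
    have hB' : ∀ i, MeasurableSet (B' i) := by
      intro i
      by_cases h : i = k
      · simpa [hB'def, h] using hB
      · simp [hB'def, h]
    have hset : {ω : Ω | ∀ i < k + 1, RenewalAux.blk κ Y i ω ∈ B' i}
        = (RenewalAux.blk κ Y k) ⁻¹' B := by
      ext ω
      simp only [Set.mem_setOf_eq, Set.mem_preimage]
      constructor
      · intro h
        have := h k (by omega)
        simpa [hB'def] using this
      · intro h i hi
        by_cases hik : i = k
        · subst hik; simpa [hB'def] using h
        · simp [hB'def, hik]
      
    have := hprod (k + 1) B' hB'
    rw [hset] at this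
    rw [this, Finset.prod_range_succ]
    have hone : ∀ i, i < k →
        c⁻¹ * μ ({ω | RenewalAux.blk κ Y 0 ω ∈ B' i} ∩ {ω | κ 0 ω = ⊤}) = 1 := by
      intro i hik
      have : B' i = Set.univ := by simp [hB'def]; omega
      rw [this]
      have : {ω : Ω | RenewalAux.blk κ Y 0 ω ∈ (Set.univ : Set (Σ m : ℕ, Fin m → E))}
          = Set.univ := by ext ω; simp
      rw [this, Set.univ_inter]
      exact ENNReal.inv_mul_cancel hc0 hctop
    have hprodone : ∏ i ∈ Finset.range k,
        (c⁻¹ * μ ({ω | RenewalAux.blk κ Y 0 ω ∈ B' i} ∩ {ω | κ 0 ω = ⊤})) = 1 :=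
      Finset.prod_eq_one fun i hi => hone i (Finset.mem_range.mp hi)
    rw [hprodone, one_mul]
    have : B' k = B := by simp [hB'def]
    rw [this]
  refine ⟨hae, ?_, ?_⟩
  · -- independence
    rw [ProbabilityTheory.iIndepFun_iff_measure_inter_preimage_eq_mul]
    intro T sets hsets
    set n := T.sup id + 1 with hndef
    set B' : ℕ → Set (Σ m : ℕ, Fin m → E) := fun i => if i ∈ T then sets i else Set.univ
      with hB'def
    have hB' : ∀ i, MeasurableSet (B' i) := by
      intro i
      by_cases h : i ∈ T
      · simpa [hB'def, h] using hsets i h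
      · simp [hB'def, h]
    have hseteq : (⋂ i ∈ T, (RenewalAux.blk κ Y i) ⁻¹' sets i)
        = {ω | ∀ i < n, RenewalAux.blk κ Y i ω ∈ B' i} := by
      ext ω
      simp only [Set.mem_iInter, Set.mem_preimage, Set.mem_setOf_eq]
      constructor
      · intro h i _
        by_cases hiT : i ∈ T
        · simpa [hB'def, hiT] using h i hiT
        · simp [hB'def, hiT]
      · intro h i hiT
        have hin : i < n := Nat.lt_succ_of_le (Finset.le_sup (f := id) hiT)
        have := h i hin
        simpa [hB'def, hiT] using this
    show μ (⋂ i ∈ T, (RenewalAux.blk κ Y i) ⁻¹' sets i)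
      = ∏ i ∈ T, μ ((RenewalAux.blk κ Y i) ⁻¹' sets i)
    rw [hseteq, hprod n B' hB']
    have hTsub : T ⊆ Finset.range n :=
      fun i hi => Finset.mem_range.mpr (Nat.lt_succ_of_le (Finset.le_sup (f := id) hi))
    rw [← Finset.prod_subset hTsub (fun i _ hiT => ?_)]
    · apply Finset.prod_congr rfl
      intro i hi
      rw [hmarg i (sets i) (hsets i hi)]
      congr 2
      simp [hB'def, hi]
    · have : B' i = Set.univ := by simp [hB'def, hiT]
      rw [this]
      have h2 : {ω : Ω | RenewalAux.blk κ Y 0 ω ∈ (Set.univ : Set (Σ m : ℕ, Fin m → E))}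
          = Set.univ := by ext ω; simp
      rw [h2, Set.univ_inter]
      exact ENNReal.inv_mul_cancel hc0 hctop
  · -- identical distribution
    intro k
    have hΨmeas : Measurable (RenewalAux.blk κ Y k) :=
      RenewalAux.measurable_blk κ Y hκ hY k
    have hnthmeas : Measurable (fun ω => Nat.nth (fun n => κ n ω = ⊤) 1) :=
      RenewalAux.measurable_nth (fun ω n => κ n ω = ⊤) (fun n => hptop n) 1
    have hΨ0meas : Measurable (fun ω : Ω =>
        (⟨Nat.nth (fun n => κ n ω = ⊤) 1, fun j => Y (j : ℕ) ω⟩ : Σ m : ℕ, Fin m → E)) := by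
      exact RenewalAux.measurable_mk_dep (F := fun ω m => fun j : Fin m => Y (j : ℕ) ω)
        hnthmeas (fun m => measurable_pi_lambda _ fun j => hY j)
    show Measure.map (RenewalAux.blk κ Y k) μ = _
    apply Measure.ext
    intro t ht
    rw [Measure.map_apply hΨmeas ht, Measure.map_apply hΨ0meas ht]
    rw [hmarg k t ht]
    rw [ProbabilityTheory.cond_apply (hptop 0) μ]
    congr 1
    have hseteq : {ω | RenewalAux.blk κ Y 0 ω ∈ t} ∩ {ω | κ 0 ω = ⊤}
        = {ω | κ 0 ω = ⊤} ∩ ((fun ω : Ω =>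
            (⟨Nat.nth (fun n => κ n ω = ⊤) 1, fun j => Y (j : ℕ) ω⟩ :
              Σ m : ℕ, Fin m → E)) ⁻¹' t) := by
      ext ω
      simp only [Set.mem_inter_iff, Set.mem_setOf_eq, Set.mem_preimage]
      constructor
      · rintro ⟨h1, h2⟩
        refine ⟨h2, ?_⟩
        rw [← RenewalAux.blk_zero_eq κ Y ω h2]
        exact h1
      · rintro ⟨h1, h2⟩
        refine ⟨?_, h1⟩
        rw [RenewalAux.blk_zero_eq κ Y ω h1]
        exact h2
    rw [hseteq]
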